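/- For every separately continuous function f : [0,1] × [0,1] → ℝ, the set D(f) of points of discontinuity of f is contained in a product A × B where A, B ⊆ [0,1] are meagre (first category) sets. -/

import Mathlib

open Set

private lemma nd_meagre {X : Type*} [TopologicalSpace X] {s : Set X}
    (h : IsNowhereDense s) : IsMeagre s :=
  isMeagre_iff_countable_union_isNowhereDense.mpr
    ⟨{s}, by simpa using h, countable_singleton s, by simp⟩

private lemma half (f : Icc (0:ℝ) 1 × Icc (0:ℝ) 1 → ℝ)
    (hfx : ∀ x : Icc (0:ℝ) 1, Continuous fun y => f (x, y))
    (hfy : ∀ y : Icc (0:ℝ) 1, Continuous fun x => f (x, y)) :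
    ∃ A : Set (Icc (0:ℝ) 1), IsMeagre A ∧
      ∀ p : Icc (0:ℝ) 1 × Icc (0:ℝ) 1, ¬ ContinuousAt f p → p.1 ∈ A := by
  -- the sets E δ ε
  set E : ℝ → ℝ → Set (Icc (0:ℝ) 1) := fun δ ε =>
    {x : Icc (0:ℝ) 1 | ∀ y y' : Icc (0:ℝ) 1, dist y y' ≤ δ → |f (x, y) - f (x, y')| ≤ ε} with hE
  have hEclosed : ∀ δ ε, IsClosed (E δ ε) := by
    intro δ ε
    have : E δ ε = ⋂ (y : Icc (0:ℝ) 1) (y' : Icc (0:ℝ) 1),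
        {x | dist y y' ≤ δ → |f (x, y) - f (x, y')| ≤ ε} := by
      ext x; simp only [hE, mem_iInter, mem_setOf_eq]
    rw [this]
    refine isClosed_iInter fun y => isClosed_iInter fun y' => ?_
    by_cases h : dist y y' ≤ δ
    · have : {x : Icc (0:ℝ) 1 | dist y y' ≤ δ → |f (x, y) - f (x, y')| ≤ ε} =
          {x | |f (x, y) - f (x, y')| ≤ ε} := by
        ext x; simp [h]
      rw [this]
      exact isClosed_le (((hfy y).sub (hfy y')).abs) continuous_const
    · have : {x : Icc (0:ℝ) 1 | dist y y' ≤ δ → |f (x, y) - f (x, y')| ≤ ε} = univ := by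
        ext x; simp [h]
      rw [this]; exact isClosed_univ
  -- cover
  have hcover : ∀ (x : Icc (0:ℝ) 1) (ε : ℝ), 0 < ε → ∃ m : ℕ, x ∈ E (1/(m+1)) ε := by
    intro x ε hε
    have hu : UniformContinuous fun y => f (x, y) :=
      CompactSpace.uniformContinuous_of_continuous (hfx x)
    obtain ⟨δ, hδ, hδ'⟩ := Metric.uniformContinuous_iff.mp hu ε hε
    obtain ⟨m, hm⟩ := exists_nat_one_div_lt hδ
    refine ⟨m, fun y y' hyy' => ?_⟩
    have := hδ' (a := y) (b := y') (lt_of_le_of_lt hyy' (by exact_mod_cast hm))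
    rw [Real.dist_eq] at this
    exact this.le
  refine ⟨⋃ (n : ℕ) (m : ℕ), frontier (E (1/(m+1)) (1/(n+1))), ?_, ?_⟩
  · exact isMeagre_iUnion fun n => isMeagre_iUnion fun m =>
      nd_meagre (by rw [IsNowhereDense, isClosed_frontier.closure_eq]
                    exact interior_frontier (hEclosed _ _))
  · intro p hp
    by_contra hx
    apply hp
    obtain ⟨x, y⟩ := p
    simp only [mem_iUnion, not_exists] at hx
    rw [ContinuousAt, Metric.tendsto_nhds]
    intro ε hε
    obtain ⟨n, hn⟩ := exists_nat_one_div_lt (show (0:ℝ) < ε/3 by linarith)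
    obtain ⟨m, hm⟩ := hcover x (1/(n+1)) (by positivity)
    have hxint : x ∈ interior (E (1/(m+1)) (1/(n+1))) := by
      have := hx n m
      rw [frontier, (hEclosed _ _).closure_eq] at this
      by_contra h
      exact this ⟨hm, h⟩
    -- neighborhood in x where |f(x',y) - f(x,y)| < ε/3
    have hV : {x' : Icc (0:ℝ) 1 | |f (x', y) - f (x, y)| < ε/3} ∈ nhds x := by
      have : ContinuousAt (fun x' => f (x', y)) x := (hfy y).continuousAt
      have := Metric.tendsto_nhds.mp this (ε/3) (by linarith)
      exact (by simpa [Real.dist_eq] using this : ∀ᶠ x' in nhds x, |f (x', y) - f (x, y)| < ε/3)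
    have hU : (interior (E (1/(m+1)) (1/(n+1))) ∩
        {x' : Icc (0:ℝ) 1 | |f (x', y) - f (x, y)| < ε/3}) ×ˢ
        Metric.ball y (1/(m+1)) ∈ nhds (x, y) := by
      refine prod_mem_nhds ?_ (Metric.ball_mem_nhds y (by positivity))
      exact Filter.inter_mem ((isOpen_interior).mem_nhds hxint) hV
    filter_upwards [hU] with q hq
    obtain ⟨x', y'⟩ := q
    obtain ⟨⟨hx'E, hx'V⟩, hy'⟩ := hq.imp id id
    have hx'E' : x' ∈ E (1/(m+1)) (1/(n+1)) := interior_subset hx'E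
    have h1 : |f (x', y') - f (x', y)| ≤ 1/(n+1) :=
      hx'E' y' y (le_of_lt (by simpa [Real.dist_eq] using hy'))
    have h2 : |f (x', y) - f (x, y)| < ε/3 := hx'V
    rw [Real.dist_eq]
    calc |f (x', y') - f (x, y)|
        ≤ |f (x', y') - f (x', y)| + |f (x', y) - f (x, y)| := abs_sub_le _ _ _
      _ < 1/(n+1) + ε/3 := by linarith
      _ < ε := by linarith

theorem stmt18 (f : Icc (0:ℝ) 1 × Icc (0:ℝ) 1 → ℝ)
    (hfx : ∀ x : Icc (0:ℝ) 1, Continuous fun y => f (x, y))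
    (hfy : ∀ y : Icc (0:ℝ) 1, Continuous fun x => f (x, y)) :
    ∃ A B : Set (Icc (0:ℝ) 1), IsMeagre A ∧ IsMeagre B ∧
      {p | ¬ ContinuousAt f p} ⊆ A ×ˢ B := by
  obtain ⟨A, hA, hA'⟩ := half f hfx hfy
  obtain ⟨B, hB, hB'⟩ := half (f ∘ Prod.swap) hfy hfx
  refine ⟨A, B, hA, hB, fun p hp => ?_⟩
  refine ⟨hA' p hp, ?_⟩
  have := hB' (Prod.swap p) fun hc => hp (by
    simpa [Function.comp_def] using hc.comp (continuous_swap.continuousAt (x := p)))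
  simpa using this
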